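/- arXiv:1706.00119 — 2 statements merged into one kernel-verified Lean document; each statement's English description precedes it below -/
import Mathlib

section
/- Let $P$ be a probability distribution over finite sets (with decision rule inducing joint distribution over actions $a$, outcomes $y$, and sensitive attributes $z$), such that all relevant conditional probabilities are well-defined and positive. If both the calibration condition $P(y, z \mid a) = P(y \mid a) P(z \mid a)$ for all $a,y,z$ and the balance condition $P(a, z \mid y) = P(a \mid y) P(z \mid y)$ for all $a,y,z$ hold, then $P(z \mid a) = P(z \mid y)$ for all $a, y, z$ with $P(a \mid y) > 0$. -/
open Finset

/-- If both the calibration condition and the balance condition hold for a joint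
distribution `P` over actions `a`, outcomes `y` and sensitive attributes `z`
(with positive marginals), then `P(z ∣ a) = P(z ∣ y)` whenever `P(a ∣ y) > 0`. -/
theorem calibration_and_balance_imply_condZ_eq
    {A Y Z : Type*} [Fintype A] [Fintype Y] [Fintype Z]
    (P : A → Y → Z → ℝ)
    (hPnn : ∀ a y z, 0 ≤ P a y z)
    (hPsum : ∑ a, ∑ y, ∑ z, P a y z = 1)
    (pA : A → ℝ) (hpA : ∀ a, pA a = ∑ y, ∑ z, P a y z)
    (pY : Y → ℝ) (hpY : ∀ y, pY y = ∑ a, ∑ z, P a y z)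
    (hApos : ∀ a, 0 < pA a) (hYpos : ∀ y, 0 < pY y)
    -- calibration: P(y, z ∣ a) = P(y ∣ a) · P(z ∣ a)
    (hcal : ∀ a y z,
      P a y z / pA a = ((∑ z', P a y z') / pA a) * ((∑ y', P a y' z) / pA a))
    -- balance: P(a, z ∣ y) = P(a ∣ y) · P(z ∣ y)
    (hbal : ∀ a y z,
      P a y z / pY y = ((∑ z', P a y z') / pY y) * ((∑ a', P a' y z) / pY y)) :
    ∀ a y z, 0 < (∑ z', P a y z') / pY y →
      (∑ y', P a y' z) / pA a = (∑ a', P a' y z) / pY y := by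
  intro a y z h
  have hA := (hApos a).ne'
  have hY := (hYpos y).ne'
  have hS : 0 < ∑ z', P a y z' := by
    have := mul_pos h (hYpos y)
    rwa [div_mul_cancel₀ _ hY] at this
  have h1 := hcal a y z
  have h2 := hbal a y z
  field_simp at h1 h2
  have e1 : P a y z * pA a = (∑ z', P a y z') * ∑ y', P a y' z :=
    h1
  have e2 : P a y z * pY y = (∑ z', P a y z') * ∑ a', P a' y z :=
    h2
  rw [div_eq_div_iff (hApos a).ne' (hYpos y).ne']
  have key : (∑ z', P a y z') * ((∑ y', P a y' z) * pY y) =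
      (∑ z', P a y z') * ((∑ a', P a' y z) * pA a) := by
    have : (P a y z * pA a) * pY y = (P a y z * pY y) * pA a := by ring
    rw [e1, e2] at this
    linarith [this]
  exact mul_left_cancel₀ hS.ne' key
end

section
/- Under the assumptions of the previous result, if moreover $z$ is not independent of $y$ (i.e., there exist $z_0, y_1, y_2$ with $P(z_0 \mid y_1) \neq P(z_0 \mid y_2)$) and the decision rule is not 'perfect' (i.e., $P(y \mid a) > 0$ and $P(a \mid y) > 0$ for all $a, y$), then the calibration and balance conditions cannot both hold. -/
open Finset

/-- If `z` is not independent of `y` and the decision rule is not perfect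
(`P(y ∣ a) > 0` and `P(a ∣ y) > 0` for all `a, y`), then calibration and
balance cannot both hold. -/
theorem calibration_and_balance_impossible
    {A Y Z : Type*} [Fintype A] [Fintype Y] [Fintype Z]
    (P : A → Y → Z → ℝ)
    (hPnn : ∀ a y z, 0 ≤ P a y z)
    (hPsum : ∑ a, ∑ y, ∑ z, P a y z = 1)
    (pA : A → ℝ) (hpA : ∀ a, pA a = ∑ y, ∑ z, P a y z)
    (pY : Y → ℝ) (hpY : ∀ y, pY y = ∑ a, ∑ z, P a y z)
    (hApos : ∀ a, 0 < pA a) (hYpos : ∀ y, 0 < pY y)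
    -- z is not independent of y
    (hdep : ∃ z0 y1 y2, (∑ a', P a' y1 z0) / pY y1 ≠ (∑ a', P a' y2 z0) / pY y2)
    -- the decision rule is not perfect
    (hperf : ∀ a y, 0 < (∑ z', P a y z') / pA a ∧ 0 < (∑ z', P a y z') / pY y) :
    ¬ ((∀ a y z,
        P a y z / pA a = ((∑ z', P a y z') / pA a) * ((∑ y', P a y' z) / pA a)) ∧
       (∀ a y z,
        P a y z / pY y = ((∑ z', P a y z') / pY y) * ((∑ a', P a' y z) / pY y))) := by
  rintro ⟨hcal, hbal⟩
  obtain ⟨z0, y1, y2, hne⟩ := hdep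
  have hA : Nonempty A := by
    by_contra h
    rw [not_nonempty_iff] at h
    simp [Finset.univ_eq_empty] at hPsum
  obtain ⟨a⟩ := hA
  have key : ∀ y, (∑ a', P a' y z0) / pY y = (∑ y', P a y' z0) / pA a := by
    intro y
    have hpa := (hApos a).ne'
    have hpy := (hYpos y).ne'
    have hS : 0 < ∑ z', P a y z' := by
      have := mul_pos (hperf a y).1 (hApos a)
      rwa [div_mul_cancel₀ _ hpa] at this
    have h1 := hcal a y z0
    have h2 := hbal a y z0
    field_simp at h1 h2 ⊢
    have h1' : P a y z0 * pA a = (∑ z', P a y z') * ∑ y', P a y' z0 :=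
      by linear_combination h1
    have h2' : P a y z0 * pY y = (∑ z', P a y z') * ∑ a', P a' y z0 :=
      by linear_combination h2
    apply mul_left_cancel₀ hS.ne'
    linear_combination pY y * h1' - pA a * h2'
  exact hne ((key y1).trans (key y2).symm)
end
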